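/- Fix t > 0. Let h ∈ L¹(ℝ³) be real-valued, odd with respect to the plane {x₁ = 0} (h(−y₁,y') = −h(y₁,y') a.e.), with h ≥ 0 a.e. on {y₁ > 0} and h not a.e. equal to 0. Define u(x) := π^{-2} ∫_{ℝ³} t (t² + |x−y|²)^{-2} h(y) dy. Then u(x) > 0 for every x with x₁ > 0, and for every x' ∈ ℝ² the partial derivative ∂u/∂x₁ at the point (0,x') exists and equals (8/π²) ∫_{y₁>0} t y₁ (t² + y₁² + |x'−y'|²)^{-3} h(y) dy, which is strictly positive. -/

import Mathlib

open MeasureTheory Filter Set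

noncomputable section

/-- `ℝ³` with the Euclidean norm. -/
abbrev E3 : Type := EuclideanSpace ℝ (Fin 3)

/-- The point `(s, y, z) ∈ ℝ³`. -/
def pt (s y z : ℝ) : E3 := (WithLp.equiv 2 (Fin 3 → ℝ)).symm ![s, y, z]

/-! ### Auxiliary lemmas -/

/-- Reflection in the first coordinate, as a linear isometry equivalence. -/
def R3 : E3 ≃ₗᵢ[ℝ] E3 :=
  LinearIsometryEquiv.piLpCongrRight 2 (fun i => if i = 0 then .neg ℝ else .refl ℝ ℝ)

lemma R3_apply (x : E3) : R3 x = pt (-(x 0)) (x 1) (x 2) := by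
  ext i
  fin_cases i <;>
    simp [R3, pt, LinearIsometryEquiv.piLpCongrRight_apply, Matrix.cons_val_zero,
      Matrix.cons_val_one]

lemma R3_0 (x : E3) : R3 x 0 = -(x 0) := by rw [R3_apply]; rfl
lemma R3_1 (x : E3) : R3 x 1 = x 1 := by rw [R3_apply]; rfl
lemma R3_2 (x : E3) : R3 x 2 = x 2 := by rw [R3_apply]; rfl

lemma R3_invol (x : E3) : R3 (R3 x) = x := by
  ext i; fin_cases i <;> simp [R3_0, R3_1, R3_2]

lemma mpR3 : MeasurePreserving R3 (volume : Measure E3) volume :=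
  R3.measurePreserving

lemma embR3 : MeasurableEmbedding (R3 : E3 → E3) :=
  R3.toHomeomorph.measurableEmbedding

lemma meas_coord (i : Fin 3) : Measurable fun w : E3 => w i :=
  (EuclideanSpace.proj (𝕜 := ℝ) i).continuous.measurable

lemma measS : MeasurableSet {w : E3 | 0 < w 0} :=
  measurableSet_lt measurable_const (meas_coord 0)

lemma ae_comp {p : E3 → Prop} (hp : ∀ᵐ w : E3 ∂volume, p w) :
    ∀ᵐ w : E3 ∂volume, p (R3 w) := by
  rw [ae_iff] at hp ⊢
  exact mpR3.quasiMeasurePreserving.preimage_null hp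

lemma hyperplane_null : (volume : Measure E3) {x : E3 | x 0 = 0} = 0 := by
  have : {x : E3 | x 0 = 0}
      = (LinearMap.ker (EuclideanSpace.proj (𝕜 := ℝ) (0 : Fin 3) : E3 →ₗ[ℝ] ℝ) : Set E3) := by
    ext x; simp [LinearMap.mem_ker]
  rw [this]
  apply MeasureTheory.Measure.addHaar_submodule
  intro hker
  have h1 : (EuclideanSpace.single 0 (1:ℝ) : E3)
      ∈ LinearMap.ker (EuclideanSpace.proj (𝕜 := ℝ) (0 : Fin 3) : E3 →ₗ[ℝ] ℝ) := by
    rw [hker]; trivial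
  simp [LinearMap.mem_ker] at h1

lemma symm_integral (f : E3 → ℝ) (hf : Integrable f)
    (heven : ∀ᵐ x : E3 ∂volume, f (R3 x) = f x) :
    ∫ x : E3, f x = 2 * ∫ x in {x : E3 | 0 < x 0}, f x := by
  have h0 : ∀ᵐ x : E3 ∂volume, ¬ x 0 = 0 := by
    rw [ae_iff]; simpa using hyperplane_null
  have hcompl : {x : E3 | 0 < x 0}ᶜ =ᵐ[volume] {x : E3 | x 0 < 0} := by
    filter_upwards [h0] with x hx
    show (x ∈ {x : E3 | 0 < x 0}ᶜ) = (x ∈ {x : E3 | x 0 < 0})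
    simp only [eq_iff_iff, mem_compl_iff, mem_setOf_eq, not_lt]
    constructor
    · intro hle; exact lt_of_le_of_ne hle hx
    · exact fun hlt => hlt.le
  have hsplit := integral_add_compl measS hf
  have e1 : ∫ x in {x : E3 | 0 < x 0}ᶜ, f x = ∫ x in {x : E3 | x 0 < 0}, f x :=
    setIntegral_congr_set hcompl
  have e2 : ∫ x in {x : E3 | x 0 < 0}, f x = ∫ x in {x : E3 | 0 < x 0}, f x := by
    have hpre : (R3 : E3 → E3) ⁻¹' {x : E3 | x 0 < 0} = {x : E3 | 0 < x 0} := by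
      ext x; simp [R3_0]
    calc ∫ x in {x : E3 | x 0 < 0}, f x
        = ∫ x in (R3 : E3 → E3) ⁻¹' {x : E3 | x 0 < 0}, f (R3 x) :=
          (mpR3.setIntegral_preimage_emb embR3 f _).symm
      _ = ∫ x in {x : E3 | 0 < x 0}, f (R3 x) := by rw [hpre]
      _ = ∫ x in {x : E3 | 0 < x 0}, f x :=
          setIntegral_congr_ae measS (by filter_upwards [heven] with x hx _ using hx)
  linarith [hsplit, e1, e2]

lemma set_pos (f g : E3 → ℝ) (hfi : IntegrableOn f {w : E3 | 0 < w 0})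
    (h0 : 0 ≤ᵐ[(volume : Measure E3).restrict {w : E3 | 0 < w 0}] f)
    (hsub : ∀ w : E3, 0 < w 0 → 0 < g w → 0 < f w)
    (hS : 0 < (volume : Measure E3) ({w : E3 | 0 < w 0} ∩ {w : E3 | 0 < g w})) :
    0 < ∫ w in {w : E3 | 0 < w 0}, f w := by
  rw [setIntegral_pos_iff_support_of_nonneg_ae h0 hfi]
  refine lt_of_lt_of_le hS (measure_mono ?_)
  rintro w ⟨hw0, hwg⟩
  exact ⟨(hsub w hw0 hwg).ne', hw0⟩

lemma bnd2 {t b : ℝ} (G : ℝ) (ht : 0 < t) (hb : 0 ≤ b) :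
    |t * G / (t^2 + b)^2| ≤ 1/t^3 * |G| := by
  rw [abs_div, abs_mul, abs_of_pos ht, abs_of_pos (show (0:ℝ) < (t^2+b)^2 by positivity),
    div_le_iff₀ (by positivity)]
  have h1 : t^4 ≤ (t^2+b)^2 := by nlinarith
  calc t * |G| = 1/t^3 * |G| * t^4 := by field_simp
    _ ≤ 1/t^3 * |G| * (t^2+b)^2 := by
        apply mul_le_mul_of_nonneg_left h1; positivity

lemma bnd3 {t a c : ℝ} (G : ℝ) (ht : 0 < t) (hc : 0 ≤ c) :
    |(-4) * t * (a * G) / (t^2 + a^2 + c)^3| ≤ 2/t^4 * |G| := by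
  have hQ : 0 < t^2 + a^2 + c := by positivity
  rw [abs_div, abs_of_pos (show (0:ℝ) < (t^2+a^2+c)^3 by positivity),
    div_le_iff₀ (by positivity)]
  have e : |(-4) * t * (a * G)| = 4 * t * |a| * |G| := by
    rw [abs_mul, abs_mul, abs_mul]
    rw [abs_neg, abs_of_pos ht]
    norm_num; ring
  rw [e]
  have key : 4 * t * |a| ≤ 2 * (t^2 + a^2) := by
    nlinarith [sq_nonneg (|a| - t), sq_abs a]
  have hQ3 : (t^2 + a^2) * t^4 ≤ (t^2 + a^2 + c)^3 := by
    have h1 : t^4 ≤ (t^2+a^2)^2 := by nlinarith [sq_nonneg (t*a)]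
    have h2 : (t^2+a^2)^3 ≤ (t^2+a^2+c)^3 :=
      pow_le_pow_left₀ (by positivity) (by linarith) 3
    calc (t^2+a^2) * t^4 ≤ (t^2+a^2) * (t^2+a^2)^2 :=
          mul_le_mul_of_nonneg_left h1 (by positivity)
      _ = (t^2+a^2)^3 := by ring
      _ ≤ (t^2+a^2+c)^3 := h2
  calc 4 * t * |a| * |G| ≤ 2 * (t^2+a^2) * |G| :=
        mul_le_mul_of_nonneg_right key (abs_nonneg G)
    _ = 2/t^4 * |G| * ((t^2+a^2) * t^4) := by field_simp
    _ ≤ 2/t^4 * |G| * (t^2+a^2+c)^3 := by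
        apply mul_le_mul_of_nonneg_left hQ3; positivity

lemma pt_c0 (s a b : ℝ) : pt s a b 0 = s := rfl
lemma pt_c1 (s a b : ℝ) : pt s a b 1 = a := rfl
lemma pt_c2 (s a b : ℝ) : pt s a b 2 = b := rfl

lemma pt_eq (s y z : ℝ) : pt 0 y z + s • EuclideanSpace.single 0 (1:ℝ) = pt s y z := by
  ext i
  fin_cases i <;> simp [pt, EuclideanSpace.single_apply]

lemma norm_sq (a b : E3) :
    ‖a - b‖^2 = (a 0 - b 0)^2 + (a 1 - b 1)^2 + (a 2 - b 2)^2 := by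
  rw [EuclideanSpace.norm_eq, Real.sq_sqrt (by positivity)]
  simp [Fin.sum_univ_three, sq_abs]

lemma normsq_reflect (x w : E3) :
    ‖x - R3 w‖^2 - ‖x - w‖^2 = 4 * (x 0 * w 0) := by
  rw [norm_sq, norm_sq, R3_0, R3_1, R3_2]; ring

set_option maxHeartbeats 1000000 in
/-- the key computation in the proof of Lemma 3.4.  Let `t > 0` and
`h ∈ L¹(ℝ³)` be odd with respect to `{x₁ = 0}`, nonnegative on `{x₁ > 0}` and nontrivial.
Then `u = exp(-t√(-Δ)) h` (given by the Poisson kernel) is strictly positive on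
`{x₁ > 0}`, and its `x₁`-partial derivative at each point `(0, x')` exists, equals
`(8/π²) ∫_{y₁>0} t y₁ (t² + y₁² + |x'-y'|²)⁻³ h(y) dy`, and is strictly positive. -/
theorem poisson_extension_hopf
    (t : ℝ) (ht : 0 < t)
    (h : E3 → ℝ) (hint : Integrable h)
    (hodd : ∀ᵐ y : E3 ∂(volume), h (pt (-(y 0)) (y 1) (y 2)) = - h y)
    (hpos : ∀ᵐ y : E3 ∂(volume), 0 < y 0 → 0 ≤ h y)
    (hne : ¬ (h =ᵐ[(volume : Measure E3)] 0))
    (u : E3 → ℝ)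
    (hu : ∀ x : E3, u x =
      (Real.pi)^(-2 : ℤ) * ∫ y : E3, t * h y / (t^2 + ‖x - y‖^2)^2) :
    (∀ x : E3, 0 < x 0 → 0 < u x) ∧
    ∀ y z : ℝ,
      HasLineDerivAt ℝ u
        ((8 / Real.pi^2) * ∫ w in {w : E3 | 0 < w 0},
          t * (w 0) * h w / (t^2 + (w 0)^2 + (y - w 1)^2 + (z - w 2)^2)^3)
        (pt 0 y z) (EuclideanSpace.single 0 (1:ℝ)) ∧
      0 < (8 / Real.pi^2) * ∫ w in {w : E3 | 0 < w 0},
          t * (w 0) * h w / (t^2 + (w 0)^2 + (y - w 1)^2 + (z - w 2)^2)^3 := by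
  classical
  obtain ⟨g, hgsm, hhg⟩ := hint.aestronglyMeasurable
  have hg : Measurable g := hgsm.measurable
  have gint : Integrable g := hint.congr hhg
  have hgR : ∀ᵐ w : E3 ∂volume, h (R3 w) = g (R3 w) := ae_comp hhg
  have godd : ∀ᵐ w : E3 ∂volume, g (R3 w) = - g w := by
    filter_upwards [hodd, hhg, hgR] with w h1 h2 h3
    rw [← h3, R3_apply, h1, h2]
  have gpos : ∀ᵐ w : E3 ∂volume, 0 < w 0 → 0 ≤ g w := by
    filter_upwards [hpos, hhg] with w h1 h2 hw
    rw [← h2]; exact h1 hw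
  have gne : ¬ (g =ᵐ[(volume : Measure E3)] 0) := fun hc => hne (hhg.trans hc)
  have h0c : ∀ᵐ w : E3 ∂volume, ¬ w 0 = 0 := by
    rw [ae_iff]; simpa using hyperplane_null
  -- the set where g is positive in the right half-space has positive measure
  have hSpos : 0 < (volume : Measure E3) ({w : E3 | 0 < w 0} ∩ {w : E3 | 0 < g w}) := by
    by_contra hcon
    rw [not_lt, le_zero_iff] at hcon
    have hnm : ∀ᵐ w : E3 ∂volume, w ∉ ({w : E3 | 0 < w 0} ∩ {w : E3 | 0 < g w}) :=
      (ae_iff.2 (by simpa only [not_not, Set.setOf_mem_eq] using hcon))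
    have hz1 : ∀ᵐ w : E3 ∂volume, 0 < w 0 → g w = 0 := by
      filter_upwards [hnm, gpos] with w h1 h2 hw
      have : ¬ 0 < g w := fun hgw => h1 ⟨hw, hgw⟩
      linarith [h2 hw, not_lt.mp this]
    have hz2 : ∀ᵐ w : E3 ∂volume, 0 < -(w 0) → g (R3 w) = 0 := by
      have := ae_comp (p := fun w => 0 < w 0 → g w = 0) hz1
      filter_upwards [this] with w hw hw0
      exact hw (by rw [R3_0]; exact hw0)
    apply gne
    filter_upwards [hz1, hz2, godd, h0c] with w a b c d
    rcases lt_trichotomy (w 0) 0 with hlt | heq | hgt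
    · have := b (by linarith)
      rw [c] at this
      simpa using by linarith [this]
    · exact absurd heq d
    · simpa using a hgt
  -- Part 1 : positivity on the half-space
  have part1 : ∀ x : E3, 0 < x 0 → 0 < u x := by
    intro x hx
    have hcont : Continuous fun w : E3 => (t^2 + ‖x - w‖^2)^2 := by
      apply Continuous.pow
      exact continuous_const.add ((continuous_const.sub continuous_id).norm.pow 2)
    set K : E3 → ℝ := fun w => t * g w / (t^2 + ‖x - w‖^2)^2 with hKdef
    have hKmeas : Measurable K := (measurable_const.mul hg).div hcont.measurable
    have hKint : Integrable K := by
      apply Integrable.mono' (gint.norm.const_mul (1/t^3)) hKmeas.aestronglyMeasurable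
      filter_upwards with w
      rw [hKdef, Real.norm_eq_abs, Real.norm_eq_abs]
      exact bnd2 (g w) ht (by positivity)
    have hux : u x = Real.pi^(-2:ℤ) * ∫ w : E3, K w := by
      rw [hu x]; congr 1
      apply integral_congr_ae
      filter_upwards [hhg] with w hw
      rw [hKdef]; simp only; rw [hw]
    have hKR : Integrable fun w : E3 => K (R3 w) := by
      have := (memLp_one_iff_integrable.2 hKint).comp_measurePreserving mpR3
      exact memLp_one_iff_integrable.1 this
    set f : E3 → ℝ := fun w => (K w + K (R3 w)) / 2 with hfdef
    have hfint : Integrable f := (hKint.add hKR).div_const 2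
    have hfeven : ∀ w, f (R3 w) = f w := fun w => by
      simp only [hfdef, R3_invol]; ring
    have hIK : ∫ w : E3, K w = ∫ w : E3, f w := by
      have hc : ∫ w : E3, K (R3 w) = ∫ w : E3, K w := mpR3.integral_comp embR3 K
      have : ∫ w : E3, f w = ((∫ w : E3, K w) + ∫ w : E3, K (R3 w)) / 2 := by
        rw [hfdef]; simp only
        rw [integral_div, integral_add hKint hKR]
      rw [this, hc]; ring
    have hsym : ∫ w : E3, f w = 2 * ∫ w in {w : E3 | 0 < w 0}, f w :=
      symm_integral f hfint (Eventually.of_forall hfeven)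
    set f' : E3 → ℝ :=
      fun w => g w * (t/(t^2+‖x-w‖^2)^2 - t/(t^2+‖x - R3 w‖^2)^2) / 2 with hf'def
    have hffae : f =ᵐ[(volume : Measure E3).restrict {w : E3 | 0 < w 0}] f' := by
      filter_upwards [ae_restrict_of_ae godd] with w hw
      simp only [hfdef, hKdef, hf'def, hw]; ring
    have hcongr : ∫ w in {w : E3 | 0 < w 0}, f w = ∫ w in {w : E3 | 0 < w 0}, f' w :=
      integral_congr_ae hffae
    have hf'int : IntegrableOn f' {w : E3 | 0 < w 0} := hfint.integrableOn.congr hffae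
    have hlt : ∀ w : E3, 0 < w 0 →
        t/(t^2+‖x - R3 w‖^2)^2 < t/(t^2+‖x-w‖^2)^2 := by
      intro w hw
      have hr := normsq_reflect x w
      have h1 : ‖x - w‖^2 < ‖x - R3 w‖^2 := by nlinarith [mul_pos hx hw]
      apply div_lt_div_of_pos_left ht (by positivity)
      have : (0:ℝ) ≤ ‖x - w‖^2 := by positivity
      nlinarith
    have h0 : 0 ≤ᵐ[(volume : Measure E3).restrict {w : E3 | 0 < w 0}] f' := by
      filter_upwards [ae_restrict_of_ae gpos, ae_restrict_mem measS] with w hw hmem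
      have hg0 := hw hmem
      have := hlt w hmem
      simp only [hf'def, Pi.zero_apply]
      have hbr : 0 ≤ t/(t^2+‖x-w‖^2)^2 - t/(t^2+‖x - R3 w‖^2)^2 := by linarith
      positivity
    have hsub : ∀ w : E3, 0 < w 0 → 0 < g w → 0 < f' w := by
      intro w hw hgw
      have := hlt w hw
      simp only [hf'def]
      have hbr : 0 < t/(t^2+‖x-w‖^2)^2 - t/(t^2+‖x - R3 w‖^2)^2 := by linarith
      positivity
    have hpos' : 0 < ∫ w in {w : E3 | 0 < w 0}, f' w :=
      set_pos f' g hf'int h0 hsub hSpos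
    rw [hux, hIK, hsym, hcongr]
    have hpi : (0:ℝ) < Real.pi^(-2:ℤ) := by positivity
    positivity
  refine ⟨part1, fun y z => ?_⟩
  -- Part 2 : the derivative at the boundary
  set S := {w : E3 | 0 < w 0} with hSdef
  set Q : ℝ → E3 → ℝ :=
    fun s w => t^2 + (s - w 0)^2 + ((y - w 1)^2 + (z - w 2)^2) with hQdef
  have hQpos : ∀ s (w : E3), 0 < Q s w := fun s w => by
    simp only [hQdef]; positivity
  set F : ℝ → E3 → ℝ := fun s w => t * g w / (Q s w)^2 with hFdef
  set F' : ℝ → E3 → ℝ :=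
    fun s w => (-4) * t * ((s - w 0) * g w) / (Q s w)^3 with hF'def
  have hQmeas : ∀ s, Measurable fun w : E3 => Q s w := by
    intro s
    apply Measurable.add
    apply Measurable.add measurable_const
    · exact (measurable_const.sub (meas_coord 0)).pow_const 2
    · exact ((measurable_const.sub (meas_coord 1)).pow_const 2).add
        ((measurable_const.sub (meas_coord 2)).pow_const 2)
  have hFmeas : ∀ s, AEStronglyMeasurable (F s) (volume : Measure E3) := fun s =>
    ((measurable_const.mul hg).div ((hQmeas s).pow_const 2)).aestronglyMeasurable
  have hF'meas : AEStronglyMeasurable (F' 0) (volume : Measure E3) :=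
    ((measurable_const.mul ((measurable_const.sub (meas_coord 0)).mul hg)).div
      ((hQmeas 0).pow_const 3)).aestronglyMeasurable
  have hFint : Integrable (F 0) := by
    apply Integrable.mono' (gint.norm.const_mul (1/t^3)) (hFmeas 0)
    filter_upwards with w
    rw [Real.norm_eq_abs, Real.norm_eq_abs]
    have hb : (0:ℝ) ≤ (0 - w 0)^2 + ((y - w 1)^2 + (z - w 2)^2) := by positivity
    have : F 0 w = t * g w / (t^2 + ((0 - w 0)^2 + ((y - w 1)^2 + (z - w 2)^2)))^2 := by
      simp only [hFdef, hQdef]; ring_nf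
    rw [this]
    exact bnd2 (g w) ht hb
  have key := hasDerivAt_integral_of_dominated_loc_of_deriv_le
    (F := F) (F' := F') (x₀ := (0:ℝ)) (bound := fun w => 2/t^4 * |g w|)
    (μ := (volume : Measure E3)) (Metric.ball_mem_nhds _ zero_lt_one)
    (Eventually.of_forall fun s => hFmeas s) hFint hF'meas
    (Eventually.of_forall fun w s _ => by
      rw [Real.norm_eq_abs]
      simp only [hF'def, hQdef]
      exact bnd3 (g w) ht (by positivity))
    ((gint.norm.const_mul (2/t^4)).congr (Eventually.of_forall fun w => by
      simp [Real.norm_eq_abs]))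
    (Eventually.of_forall fun w s _ => by
      have h1 : HasDerivAt (fun s : ℝ => s - w 0) 1 s := (hasDerivAt_id s).sub_const _
      have h2 := h1.pow 2
      have hQd : HasDerivAt (fun s => Q s w) (2 * (s - w 0)) s := by
        have h3 := (h2.const_add (t^2)).add_const ((y - w 1)^2 + (z - w 2)^2)
        refine h3.congr_deriv ?_
        simp
      have hne2 : (Q s w)^2 ≠ 0 := pow_ne_zero 2 (hQpos s w).ne'
      have hinv := ((hQd.pow 2).inv hne2).const_mul (t * g w)
      have heqf : (fun s => F s w) = fun s => t * g w * ((Q s w)^2)⁻¹ := by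
        funext s; simp only [hFdef, div_eq_mul_inv]
      rw [heqf]
      refine hinv.congr_deriv ?_
      simp only [hF'def, Pi.pow_apply, Nat.cast_ofNat, Nat.reduceSub, pow_one]
      field_simp
      ring)
  obtain ⟨hF'int, hderiv⟩ := key
  -- identify the limit integrand
  set J : E3 → ℝ :=
    fun w => t * (w 0) * g w / (t^2 + (w 0)^2 + (y - w 1)^2 + (z - w 2)^2)^3 with hJdef
  have hFJ : ∀ w, F' 0 w = 4 * J w := by
    intro w; simp only [hF'def, hJdef, hQdef]; ring
  have hJint : Integrable J := by
    apply (hF'int.div_const 4).congr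
    filter_upwards with w
    rw [hFJ w]; ring
  have hJeven : ∀ᵐ w : E3 ∂volume, J (R3 w) = J w := by
    filter_upwards [godd] with w hw
    simp only [hJdef, R3_0, R3_1, R3_2, hw]; ring
  have hsymJ : ∫ w : E3, J w = 2 * ∫ w in S, J w := symm_integral J hJint hJeven
  have hIJ : ∫ w : E3, F' 0 w = 4 * (2 * ∫ w in S, J w) := by
    rw [← hsymJ, ← integral_const_mul]
    exact integral_congr_ae (Eventually.of_forall hFJ)
  -- the statement's integral equals the `g`-version
  have hstmt : ∫ w in S, t * (w 0) * h w / (t^2 + (w 0)^2 + (y - w 1)^2 + (z - w 2)^2)^3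
      = ∫ w in S, J w := by
    apply setIntegral_congr_ae measS
    filter_upwards [hhg] with w hw _
    simp only [hJdef, hw]
  -- the derivative statement
  have hline : HasLineDerivAt ℝ u
      ((8 / Real.pi^2) * ∫ w in S,
        t * (w 0) * h w / (t^2 + (w 0)^2 + (y - w 1)^2 + (z - w 2)^2)^3)
      (pt 0 y z) (EuclideanSpace.single 0 (1:ℝ)) := by
    have hD := hderiv.const_mul ((Real.pi)^(-2:ℤ))
    show HasDerivAt (fun s : ℝ => u (pt 0 y z + s • EuclideanSpace.single 0 (1:ℝ))) _ 0
    have hfun : (fun s : ℝ => u (pt 0 y z + s • EuclideanSpace.single 0 (1:ℝ)))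
        = fun s : ℝ => (Real.pi)^(-2:ℤ) * ∫ w : E3, F s w := by
      funext s
      rw [pt_eq, hu]
      congr 1
      apply integral_congr_ae
      filter_upwards [hhg] with w hw
      rw [norm_sq, pt_c0, pt_c1, pt_c2, hw]
      simp only [hFdef, hQdef]
      ring_nf
    rw [hfun]
    have hval : (Real.pi)^(-2:ℤ) * ∫ w : E3, F' 0 w
        = (8 / Real.pi^2) * ∫ w in S,
            t * (w 0) * h w / (t^2 + (w 0)^2 + (y - w 1)^2 + (z - w 2)^2)^3 := by
      rw [hIJ, hstmt]
      have hpz : ((Real.pi)^(-2:ℤ) : ℝ) = 1 / Real.pi^2 := by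
        rw [zpow_neg, one_div, zpow_two, sq]
      rw [hpz]
      ring
    rw [← hval]
    exact hD
  refine ⟨hline, ?_⟩
  rw [hstmt]
  have hJpos : 0 < ∫ w in S, J w := by
    apply set_pos J g
    · exact hJint.integrableOn
    · filter_upwards [ae_restrict_of_ae gpos, ae_restrict_mem measS] with w hw hmem
      have hg0 := hw hmem
      simp only [hJdef, Pi.zero_apply]
      apply div_nonneg _ (by positivity)
      have := hmem
      change 0 < w 0 at this
      have h1 : 0 ≤ t * w 0 := by positivity
      exact mul_nonneg h1 hg0
    · intro w hw hgw
      simp only [hJdef]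
      apply div_pos _ (by positivity)
      have h1 : 0 < t * w 0 := by positivity
      exact mul_pos h1 hgw
    · exact hSpos
  have h8 : (0:ℝ) < 8 / Real.pi^2 := by positivity
  exact mul_pos h8 hJpos
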